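/- arXiv:1612.06054 — 3 statements merged into one kernel-verified Lean document; each statement's English description precedes it below -/
import Mathlib

section
/- Let L be a first-order language with only function symbols, let K be a class of metric L-algebras closed under isometric L-isomorphisms, M-products (with the sup extended metric), and M-subalgebras, let X be a set, and let F : Term_L(X) → F_K(X) be the surjective L-homomorphism onto the K-free algebra over X (characterized by the universal property: every L-homomorphism from Term_L(X) into a member of K factors uniquely through F via a non-expansive L-homomorphism). Then for all L-terms s, t ∈ Term_L(X) and every ε ∈ [0,∞], d(F(s), F(t)) ≤ ε holds in F_K(X) if and only if every A in K satisfies the M-equation X ⊢ s =_ε t. -/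
open FirstOrder FirstOrder.Language
open scoped ENNReal

universe u v w x y z

noncomputable section

namespace MetricAlgebraPaper

/-- The sup extended metric on a product of extended metric spaces. -/
def supEMetric {I : Type*} (A : I → Type*) [∀ i, EMetricSpace (A i)] :
    EMetricSpace (∀ i, A i) where
  edist f g := ⨆ i, edist (f i) (g i)
  edist_self f := by simp
  edist_comm f g := by simp [edist_comm]
  edist_triangle f g h :=
    iSup_le fun i => (edist_triangle (f i) (g i) (h i)).trans
      (add_le_add (le_iSup (fun j => edist (f j) (g j)) i)
        (le_iSup (fun j => edist (g j) (h j)) i))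
  eq_of_edist_eq_zero := by
    intro f g hfg
    funext i
    exact eq_of_edist_eq_zero
      (le_antisymm (le_trans (le_iSup (fun j => edist (f j) (g j)) i) hfg.le) zero_le)

/-- The pointwise `L`-structure on a product. -/
def piStr (L : FirstOrder.Language.{u, v}) {I : Type*} (A : I → Type*)
    [∀ i, L.Structure (A i)] : L.Structure (∀ i, A i) where
  funMap f a := fun i => Structure.funMap f fun j => a j i
  RelMap r a := ∀ i, Structure.RelMap r fun j => a j i

/-- The term algebra structure on the set of `L`-terms over `X`. -/
instance termStructure (L : FirstOrder.Language.{u, v}) (X : Type w) :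
    L.Structure (L.Term X) where
  funMap f ts := Term.func f ts
  RelMap _ _ := False

/-- A map between extended metric spaces is non-expansive if it does not increase distances. -/
def NonExpansive {α : Type*} {β : Type*} [EMetricSpace α] [EMetricSpace β] (f : α → β) : Prop :=
  ∀ a b : α, edist (f a) (f b) ≤ edist a b

/-- A metric `L`-algebra: a type equipped with an extended metric and an `L`-structure. -/
structure MetricAlg (L : FirstOrder.Language.{u, v}) where
  carrier : Type u
  [emetric : EMetricSpace carrier]
  [str : L.Structure carrier]

attribute [instance] MetricAlg.emetric MetricAlg.str

instance {L : FirstOrder.Language.{u, v}} : CoeSort (MetricAlg L) (Type u) :=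
  ⟨MetricAlg.carrier⟩

variable {L : FirstOrder.Language.{u, v}}

/-- Satisfaction of the M-equation `X ⊢ s =_ε t` in a metric `L`-algebra. -/
def Sat (A : MetricAlg L) {X : Type w} (s t : L.Term X) (ε : ℝ≥0∞) : Prop :=
  ∀ v : X → A, edist (s.realize v) (t.realize v) ≤ ε

/-- A metric `L`-algebra is quantitative if all its operations are non-expansive
for the sup metric on finite powers. -/
def IsQuantitative (A : MetricAlg L) : Prop :=
  ∀ (n : ℕ) (f : L.Functions n) (a b : Fin n → A),
    edist (Structure.funMap f a) (Structure.funMap f b) ≤ ⨆ i, edist (a i) (b i)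

/-- The M-product of a family of metric `L`-algebras: the product of the underlying
`L`-structures equipped with the sup extended metric. -/
def MProd {I : Type u} (A : I → MetricAlg L) : MetricAlg L where
  carrier := ∀ i, (A i).carrier
  emetric := supEMetric fun i => (A i).carrier
  str := piStr L fun i => (A i).carrier

/-- An M-subalgebra of a metric `L`-algebra: an `L`-substructure with the induced metric. -/
def MSub (A : MetricAlg L) (S : L.Substructure A.carrier) : MetricAlg L where
  carrier := S
  emetric := inferInstance
  str := inferInstance

/-- Closure of a class under isometric `L`-isomorphisms. -/
def ClosedUnderIso (K : MetricAlg L → Prop) : Prop :=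
  ∀ A B : MetricAlg L, K A → ∀ φ : A ≃[L] B, Isometry ⇑φ → K B

/-- Closure of a class under M-products (with the sup extended metric). -/
def ClosedUnderProd (K : MetricAlg L → Prop) : Prop :=
  ∀ (I : Type u) (A : I → MetricAlg L), (∀ i, K (A i)) → K (MProd A)

/-- Closure of a class under M-subalgebras (with the induced metric). -/
def ClosedUnderSub (K : MetricAlg L → Prop) : Prop :=
  ∀ A : MetricAlg L, K A → ∀ S : L.Substructure A.carrier, K (MSub A S)

/-- Closure of a class under M-quotients (surjective non-expansive homomorphic images). -/
def ClosedUnderQuot (K : MetricAlg L → Prop) : Prop :=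
  ∀ A B : MetricAlg L, K A → ∀ π : A →[L] B, Function.Surjective ⇑π → NonExpansive ⇑π → K B



/-- Realization at a valuation is an `L`-homomorphism from the term algebra. -/
def realizeHom {L : FirstOrder.Language.{u, v}} [L.IsAlgebraic] {X : Type w} {A : MetricAlg L}
    (v : X → A) : L.Term X →[L] A where
  toFun u := u.realize v
  map_fun' _ _ := rfl
  map_rel' r _ _ := isEmptyElim r

theorem hom_eq_realize {L : FirstOrder.Language.{u, v}} {X : Type w} {A : MetricAlg L}
    (g : L.Term X →[L] A) (u : L.Term X) : g u = u.realize (⇑g ∘ Term.var) := by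
  induction u with
  | var x => rfl
  | func f ts ih =>
      have : (Term.func f ts : L.Term X) = Structure.funMap f ts := rfl
      rw [this, g.map_fun]
      show _ = Structure.funMap f fun i => (ts i).realize (⇑g ∘ Term.var)
      exact congrArg _ (funext fun i => ih i)

/-- Let `K` be a class of metric `L`-algebras closed under isometric
isomorphisms, M-products and M-subalgebras, and let `F : Term_L(X) → FA` be the
surjective homomorphism onto the `K`-free algebra over `X` (characterized by the
universal property). Then `d(F s, F t) ≤ ε` iff every member of `K` satisfies the
M-equation `X ⊢ s =_ε t`. -/
theorem edist_free_le_iff_sat (L : FirstOrder.Language.{u, v}) [L.IsAlgebraic]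
    (K : MetricAlg L → Prop)
    (hIso : ClosedUnderIso K) (hProd : ClosedUnderProd K) (hSub : ClosedUnderSub K)
    (X : Type u) (FA : MetricAlg L) (hFA : K FA) (F : L.Term X →[L] FA)
    (hFsurj : Function.Surjective ⇑F)
    (hUniv : ∀ A : MetricAlg L, K A → ∀ f : L.Term X →[L] A,
      ∃! h : FA →[L] A, NonExpansive ⇑h ∧ ⇑h ∘ ⇑F = ⇑f)
    (s t : L.Term X) (ε : ℝ≥0∞) :
    edist (F s) (F t) ≤ ε ↔ ∀ A : MetricAlg L, K A → Sat A s t ε := by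
  constructor
  · intro hd A hA v
    obtain ⟨h, ⟨hne, hcomp⟩, -⟩ := hUniv A hA (realizeHom v)
    have hs : s.realize v = h (F s) := congrFun hcomp.symm s
    have ht : t.realize v = h (F t) := congrFun hcomp.symm t
    rw [hs, ht]
    exact (hne _ _).trans hd
  · intro hsat
    have := hsat FA hFA (⇑F ∘ Term.var)
    rwa [← hom_eq_realize F s, ← hom_eq_realize F t] at this

end MetricAlgebraPaper
end
end

section
/- Let L be a first-order language with only function symbols and let K be a class of quantitative L-algebras (metric L-algebras all of whose operations are non-expansive with respect to the sup metric on finite powers) that is closed under isometric L-isomorphisms, M-products (with the sup extended metric), and M-subalgebras. Then for every set X there exist a quantitative L-algebra F_K(X) in K and a surjective L-homomorphism F : Term_L(X) → F_K(X) such that for every A in K and every L-homomorphism f : Term_L(X) → A there exists a unique non-expansive L-homomorphism h : F_K(X) → A with h ∘ F = f. -/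
open FirstOrder FirstOrder.Language
open scoped ENNReal

universe u v w x y z

noncomputable section

namespace MetricAlgebraPaper

variable {L : FirstOrder.Language.{u, v}}

section Aux

variable {L : FirstOrder.Language.{u, v}} [L.IsAlgebraic] {X : Type u}

/-- Any `L`-hom out of the term algebra is given by realization of terms. -/
theorem hom_eq_realize_s5 {A : MetricAlg L} (f : L.Term X →[L] A) (t : L.Term X) :
    f t = t.realize (fun x => f (Term.var x)) := by
  induction t with
  | var x => rfl
  | func g ts ih =>
    have h1 : (Term.func g ts : L.Term X) = Structure.funMap g ts := rfl
    rw [h1, f.map_fun]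
    show _ = Structure.funMap g fun i => (ts i).realize _
    congr 1
    funext j
    exact ih j

end Aux

/-- If a class `K` of quantitative `L`-algebras is closed under
isometric isomorphisms, M-products and M-subalgebras, then for every set `X` there is a
`K`-free quantitative algebra over `X`, i.e. a quantitative algebra `FA ∈ K` together
with a surjective homomorphism `F` from the term algebra over `X` such that every
homomorphism from the term algebra to a member of `K` factors uniquely through `F`
via a non-expansive homomorphism. -/
theorem exists_free_quantitative_algebra (L : FirstOrder.Language.{u, v}) [L.IsAlgebraic]
    (K : MetricAlg L → Prop)
    (hQ : ∀ A : MetricAlg L, K A → IsQuantitative A)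
    (hIso : ClosedUnderIso K) (hProd : ClosedUnderProd K) (hSub : ClosedUnderSub K)
    (X : Type u) :
    ∃ (FA : MetricAlg L) (F : L.Term X →[L] FA),
      K FA ∧ IsQuantitative FA ∧ Function.Surjective ⇑F ∧
        ∀ A : MetricAlg L, K A → ∀ f : L.Term X →[L] A,
          ∃! h : FA →[L] A, NonExpansive ⇑h ∧ ⇑h ∘ ⇑F = ⇑f := by
  classical
  -- Index by achievable distance functions on the term algebra.
  set Ach : (L.Term X → L.Term X → ℝ≥0∞) → Prop := fun q =>
    ∃ A : MetricAlg L, K A ∧ ∃ v : X → A.carrier,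
      ∀ s t : L.Term X, q s t = edist (s.realize v) (t.realize v) with hAch
  let I : Type u := {q // Ach q}
  have hch : ∀ i : I, ∃ A : MetricAlg L, K A ∧ ∃ v : X → A.carrier,
      ∀ s t : L.Term X, i.val s t = edist (s.realize v) (t.realize v) := fun i => i.2
  choose A KA v hv using hch
  -- The M-product of the chosen algebras.
  let P : MetricAlg L := MProd A
  have KP : K P := hProd I A KA
  -- The canonical hom from the term algebra into the product.
  let G : L.Term X →[L] P :=
    { toFun := fun t => fun i => t.realize (v i)
      map_fun' := fun f x => rfl
      map_rel' := fun r _ _ => isEmptyElim r }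
  -- Its range is a substructure.
  let S : L.Substructure P.carrier :=
    { carrier := Set.range ⇑G
      fun_mem := by
        intro n f x hx
        choose t ht using hx
        refine ⟨Structure.funMap f t, ?_⟩
        rw [G.map_fun]
        congr 1
        funext j
        exact ht j }
  let FA : MetricAlg L := MSub P S
  have KFA : K FA := hSub P KP S
  -- The corestriction of `G` to its range.
  let F : L.Term X →[L] FA :=
    { toFun := fun t => ⟨G t, ⟨t, rfl⟩⟩
      map_fun' := by
        intro n f x
        apply Subtype.ext
        exact G.map_fun f x
      map_rel' := fun r _ _ => isEmptyElim r }
  have hFsurj : Function.Surjective ⇑F := by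
    rintro ⟨a, t, rfl⟩
    exact ⟨t, rfl⟩
  -- The key distance comparison.
  have hFe : ∀ s t : L.Term X,
      edist (F s) (F t) = ⨆ i : I, edist (s.realize (v i)) (t.realize (v i)) := by
    intro s t
    rfl
  have key : ∀ (B : MetricAlg L), K B → ∀ (f : L.Term X →[L] B) (s t : L.Term X),
      edist (f s) (f t) ≤ edist (F s) (F t) := by
    intro B KB f s t
    set w : X → B.carrier := fun x => f (Term.var x) with hw
    have hq : Ach (fun s t : L.Term X => edist (s.realize w) (t.realize w)) :=
      ⟨B, KB, w, fun _ _ => rfl⟩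
    let i0 : I := ⟨_, hq⟩
    have h1 : edist (f s) (f t) = edist (s.realize (v i0)) (t.realize (v i0)) := by
      rw [hom_eq_realize_s5 f s, hom_eq_realize_s5 f t]
      exact hv i0 s t
    rw [h1, hFe]
    exact le_iSup (fun i : I => edist (s.realize (v i)) (t.realize (v i))) i0
  refine ⟨FA, F, KFA, hQ FA KFA, hFsurj, ?_⟩
  intro B KB f
  have hker : ∀ s t : L.Term X, F s = F t → f s = f t := by
    intro s t hst
    have := key B KB f s t
    rw [hst, edist_self] at this
    exact eq_of_edist_eq_zero (le_antisymm this zero_le)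
  -- the section of `F`
  let g : FA.carrier → L.Term X := Function.surjInv hFsurj
  have hg : ∀ a, F (g a) = a := Function.surjInv_eq hFsurj
  let h : FA →[L] B :=
    { toFun := fun a => f (g a)
      map_fun' := by
        intro n c x
        have h1 : Structure.funMap c x = F (Structure.funMap c (fun j => g (x j))) := by
          rw [F.map_fun]
          congr 1
          funext j
          exact (hg (x j)).symm
        have h2 : f (g (Structure.funMap c x)) = f (Structure.funMap c (fun j => g (x j))) := by
          apply hker
          rw [hg]
          exact h1
        show f (g (Structure.funMap c x)) = _
        rw [h2, f.map_fun]
        congr 1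
      map_rel' := fun r _ _ => isEmptyElim r }
  have hhF : ∀ t : L.Term X, h (F t) = f t := by
    intro t
    show f (g (F t)) = f t
    exact hker _ _ (hg (F t))
  refine ⟨h, ⟨?_, funext hhF⟩, ?_⟩
  · intro a b
    have ha := hg a
    have hb := hg b
    calc edist (h a) (h b) = edist (f (g a)) (f (g b)) := rfl
      _ ≤ edist (F (g a)) (F (g b)) := key B KB f _ _
      _ = edist a b := by rw [ha, hb]
  · rintro h' ⟨-, hc⟩
    apply Hom.ext
    intro a
    have : h' (F (g a)) = f (g a) := congrFun hc (g a)
    rw [hg] at this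
    exact this

end MetricAlgebraPaper
end
end

section
/- Let L be a first-order language with only function symbols and let K be a class of quantitative L-algebras closed under isometric L-isomorphisms. Then K is definable by a set of M-equations (each over a finite variable set) within the class of quantitative L-algebras if and only if K is closed under M-products (products with pointwise operations and the sup extended metric), M-subalgebras (L-substructures with the induced metric), and Q-quotients (images of surjective non-expansive L-homomorphisms between quantitative L-algebras). -/
open FirstOrder FirstOrder.Language
open scoped ENNReal

universe u v w x y z

noncomputable section

namespace MetricAlgebraPaper

variable {L : FirstOrder.Language.{u, v}}

/- ### auxiliary lemmas -/

lemma MProd.edist_def {I : Type u} (A : I → MetricAlg L) (f g : (MProd A).carrier) :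
    edist f g = ⨆ i, edist (f i) (g i) := rfl

lemma MProd.funMap_apply {I : Type u} (A : I → MetricAlg L) {n : ℕ} (f : L.Functions n)
    (a : Fin n → (MProd A).carrier) (i : I) :
    (Structure.funMap f a : (MProd A).carrier) i = Structure.funMap f (fun k => a k i) := rfl

lemma MProd.realize_apply {I : Type u} (A : I → MetricAlg L) {α : Type x} (t : L.Term α)
    (v : α → (MProd A).carrier) (i : I) :
    (t.realize v : (MProd A).carrier) i = t.realize (fun a => v a i) := by
  induction t with
  | var a => rfl
  | func f ts ih =>
    show (Structure.funMap f (fun k => (ts k).realize v) : (MProd A).carrier) i = _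
    rw [MProd.funMap_apply]
    show Structure.funMap f (fun k => (ts k).realize v i) = _
    simp only [Term.realize]
    exact congrArg _ (funext fun k => ih k)

lemma MProd.quantitative {I : Type u} (A : I → MetricAlg L) (h : ∀ i, IsQuantitative (A i)) :
    IsQuantitative (MProd A) := by
  intro n f a b
  rw [MProd.edist_def]
  refine iSup_le fun i => ?_
  rw [MProd.funMap_apply, MProd.funMap_apply]
  refine (h i n f _ _).trans (iSup_mono fun k => ?_)
  exact le_iSup (fun i' => edist (a k i') (b k i')) i

def MSub.incl (A : MetricAlg L) (S : L.Substructure A.carrier) :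
    (MSub A S).carrier → A.carrier := Subtype.val

lemma MSub.edist_def (A : MetricAlg L) (S : L.Substructure A.carrier)
    (x y : (MSub A S).carrier) : edist x y = edist (MSub.incl A S x) (MSub.incl A S y) := rfl

lemma MSub.coe_funMap (A : MetricAlg L) (S : L.Substructure A.carrier) {n : ℕ}
    (f : L.Functions n) (a : Fin n → (MSub A S).carrier) :
    MSub.incl A S (Structure.funMap f a)
      = Structure.funMap f (fun k => MSub.incl A S (a k)) := rfl

lemma MSub.coe_realize (A : MetricAlg L) (S : L.Substructure A.carrier) {α : Type x}
    (t : L.Term α) (v : α → (MSub A S).carrier) :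
    MSub.incl A S (t.realize v) = t.realize (fun a => MSub.incl A S (v a)) := by
  induction t with
  | var a => rfl
  | func f ts ih =>
    show MSub.incl A S (Structure.funMap f (fun k => (ts k).realize v)) = _
    rw [MSub.coe_funMap]
    simp only [Term.realize]
    exact congrArg _ (funext fun k => ih k)

lemma MSub.quantitative (A : MetricAlg L) (hA : IsQuantitative A) (S : L.Substructure A.carrier) :
    IsQuantitative (MSub A S) := by
  intro n f a b
  rw [MSub.edist_def, MSub.coe_funMap, MSub.coe_funMap]
  refine (hA n f _ _).trans (iSup_mono fun k => le_of_eq ?_)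
  rw [MSub.edist_def]

lemma realize_eqOn {α : Type x} [DecidableEq α] {M : Type u} [L.Structure M] :
    ∀ (t : L.Term α) {v₁ v₂ : α → M}, (∀ a ∈ t.varFinset, v₁ a = v₂ a) →
      t.realize v₁ = t.realize v₂
  | Term.var a, v₁, v₂, h => h a (by simp [Term.varFinset])
  | Term.func f ts, v₁, v₂, h => by
    simp only [Term.realize]
    refine congrArg _ (funext fun k => ?_)
    refine realize_eqOn (ts k) fun a ha => h a ?_
    simp only [Term.varFinset, Finset.mem_biUnion]
    exact ⟨k, Finset.mem_univ k, ha⟩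


/- ### Birkhoff machinery -/

variable (K : MetricAlg L → Prop)

/-- The set of all M-equations valid throughout `K`. -/
def eqSet : Set (Σ n : ℕ, L.Term (Fin n) × L.Term (Fin n) × ℝ≥0∞) :=
  {e | ∀ B : MetricAlg L, K B → Sat B e.2.1 e.2.2.1 e.2.2.2}

/-- A witness: a member of `K` together with a valuation. -/
def Wit (X : Type u) : Type _ := Σ' (B : MetricAlg L), PProd (K B) (X → B.carrier)

/-- The value of a pair of terms at a witness. -/
def dval {X : Type u} (p : Wit K X) (s t : L.Term X) : ℝ≥0∞ :=
  edist (s.realize p.2.2) (t.realize p.2.2)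

/-- The `K`-distance between two terms. -/
def dK {X : Type u} (s t : L.Term X) : ℝ≥0∞ := ⨆ p : Wit K X, dval K p s t

lemma edist_le_dK (A : MetricAlg L) (hne : Nonempty A.carrier)
    (hsat : ∀ e ∈ eqSet K, Sat A e.2.1 e.2.2.1 e.2.2.2) (s t : L.Term A.carrier) :
    edist (s.realize (id : A.carrier → A.carrier)) (t.realize id) ≤ dK K s t := by
  classical
  obtain ⟨x0⟩ := hne
  set F : Finset A.carrier := s.varFinset ∪ t.varFinset with hF
  set n : ℕ := Fintype.card F with hn
  set e : F ≃ Fin n := Fintype.equivFin F with he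
  set g : A.carrier → Fin (n + 1) :=
    fun a => if h : a ∈ F then (e ⟨a, h⟩).castSucc else Fin.last n with hg
  set hmap : Fin (n + 1) → A.carrier :=
    fun i => if h : (i : ℕ) < n then (e.symm ⟨(i : ℕ), h⟩ : A.carrier) else x0 with hh
  have hgh : ∀ a ∈ F, hmap (g a) = a := by
    intro a ha
    have h1 : g a = (e ⟨a, ha⟩).castSucc := by rw [hg]; exact dif_pos ha
    have h2 : ((e ⟨a, ha⟩).castSucc : ℕ) < n := (e ⟨a, ha⟩).isLt
    rw [h1, hh]
    simp only [dif_pos h2]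
    have : (⟨((e ⟨a, ha⟩).castSucc : ℕ), h2⟩ : Fin n) = e ⟨a, ha⟩ := by
      apply Fin.ext; simp
    rw [this, Equiv.symm_apply_apply]
  have hmem : (⟨n + 1, (s.relabel g, t.relabel g, dK K s t)⟩ :
      Σ m : ℕ, L.Term (Fin m) × L.Term (Fin m) × ℝ≥0∞) ∈ eqSet K := by
    intro B hB w
    show edist ((s.relabel g).realize w) ((t.relabel g).realize w) ≤ dK K s t
    rw [Term.realize_relabel, Term.realize_relabel]
    exact le_iSup (fun p => dval K p s t) ⟨B, ⟨hB, w ∘ g⟩⟩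
  have hsA := hsat _ hmem hmap
  simp only at hsA
  rw [Term.realize_relabel, Term.realize_relabel] at hsA
  have h1 : s.realize (hmap ∘ g) = s.realize (id : A.carrier → A.carrier) :=
    realize_eqOn s fun a ha => hgh a (Finset.mem_union_left _ ha)
  have h2 : t.realize (hmap ∘ g) = t.realize (id : A.carrier → A.carrier) :=
    realize_eqOn t fun a ha => hgh a (Finset.mem_union_right _ ha)
  rwa [h1, h2] at hsA

/-- Choice of near-optimal witnesses. -/
def wit {X : Type u} (w0 : Wit K X) (j : L.Term X × L.Term X × ULift.{u} ℝ≥0∞) : Wit K X :=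
  @dite _ (∃ p : Wit K X, j.2.2.down < dval K p j.1 j.2.1) (Classical.propDecidable _)
    (fun h => h.choose) (fun _ => w0)

lemma wit_spec {X : Type u} (w0 : Wit K X) (s t : L.Term X) (c : ℝ≥0∞)
    (h : c < dK K s t) : c < dval K (wit K w0 (s, t, ⟨c⟩)) s t := by
  have hex : ∃ p : Wit K X, c < dval K p s t := lt_iSup_iff.mp h
  rw [wit]
  rw [dif_pos hex]
  exact hex.choose_spec


/- ### The big product construction -/

variable {X : Type u}

def bigC (w0 : Wit K X) : (L.Term X × L.Term X × ULift.{u} ℝ≥0∞) → MetricAlg L :=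
  fun j => (wit K w0 j).1

def bigP (w0 : Wit K X) : MetricAlg L := MProd (bigC K w0)

def bigφ (w0 : Wit K X) (t : L.Term X) : (bigP K w0).carrier :=
  fun j => t.realize (wit K w0 j).2.2

lemma bigφ_dist_le (w0 : Wit K X) (s t : L.Term X) :
    dK K s t ≤ edist (bigφ K w0 s) (bigφ K w0 t) := by
  show dK K s t ≤ ⨆ j, edist (bigφ K w0 s j) (bigφ K w0 t j)
  refine le_of_forall_lt fun c hc => ?_
  have h1 := wit_spec K w0 s t c hc
  exact h1.trans_le
    (le_iSup (fun j => edist (bigφ K w0 s j) (bigφ K w0 t j)) (s, t, ⟨c⟩))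

lemma bigφ_funMap (w0 : Wit K X) {n : ℕ} (f : L.Functions n) (ts : Fin n → L.Term X) :
    bigφ K w0 (Term.func f ts) = Structure.funMap f (fun i => bigφ K w0 (ts i)) := by
  funext j
  show bigφ K w0 (Term.func f ts) j = Structure.funMap f (fun k => bigφ K w0 (ts k) j)
  rfl

def bigS (w0 : Wit K X) : L.Substructure (bigP K w0).carrier where
  carrier := Set.range (bigφ K w0)
  fun_mem := by
    intro n f xx hx
    choose ts hts using hx
    refine ⟨Term.func f ts, ?_⟩
    rw [bigφ_funMap]
    exact congrArg _ (funext fun k => hts k)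

/- ### The quotient argument -/

lemma mem_K_of_sat (hP : ClosedUnderProd K) (hS : ClosedUnderSub K)
    (hQt : ∀ A B : MetricAlg L, K A → IsQuantitative B →
      ∀ π : A →[L] B, Function.Surjective ⇑π → NonExpansive ⇑π → K B)
    [L.IsAlgebraic]
    (A : MetricAlg L) (hQA : IsQuantitative A) (hne : Nonempty A.carrier)
    (w0 : Wit K A.carrier)
    (hsat : ∀ e ∈ eqSet K, Sat A e.2.1 e.2.2.1 e.2.2.2) : K A := by
  have hKP : K (bigP K w0) := hP _ (bigC K w0) fun j => (wit K w0 j).2.1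
  have hKS : K (MSub (bigP K w0) (bigS K w0)) := hS _ hKP (bigS K w0)
  have hKey : ∀ s t : L.Term A.carrier,
      edist (s.realize (id : A.carrier → A.carrier)) (t.realize id)
        ≤ edist (bigφ K w0 s) (bigφ K w0 t) :=
    fun s t => (edist_le_dK K A hne hsat s t).trans (bigφ_dist_le K w0 s t)
  have hfid : ∀ s t : L.Term A.carrier, bigφ K w0 s = bigφ K w0 t →
      s.realize (id : A.carrier → A.carrier) = t.realize id := by
    intro s t h
    have h2 := hKey s t
    rw [h, edist_self] at h2
    exact edist_le_zero.mp h2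
  have hmem : ∀ σ : (MSub (bigP K w0) (bigS K w0)).carrier,
      MSub.incl _ _ σ ∈ Set.range (bigφ K w0) := fun σ => σ.2
  have hρ : ∀ σ, bigφ K w0 ((hmem σ).choose) = MSub.incl _ _ σ :=
    fun σ => (hmem σ).choose_spec
  have hπmap : ∀ {n : ℕ} (f : L.Functions n)
      (xx : Fin n → (MSub (bigP K w0) (bigS K w0)).carrier),
      ((hmem (Structure.funMap f xx)).choose).realize (id : A.carrier → A.carrier)
        = Structure.funMap f (fun i => ((hmem (xx i)).choose).realize id) := by
    intro n f xx
    have h1 : bigφ K w0 ((hmem (Structure.funMap f xx)).choose)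
        = bigφ K w0 (Term.func f fun i => (hmem (xx i)).choose) := by
      rw [hρ, MSub.coe_funMap, bigφ_funMap]
      exact congrArg _ (funext fun k => (hρ (xx k)).symm)
    have h2 := hfid _ _ h1
    rw [h2]
    rfl
  let π : (MSub (bigP K w0) (bigS K w0)) →[L] A :=
    { toFun := fun σ => ((hmem σ).choose).realize (id : A.carrier → A.carrier)
      map_fun' := fun f xx => hπmap f xx
      map_rel' := fun r _ _ => (IsEmpty.false r).elim }
  have hsurj : Function.Surjective ⇑π := by
    intro a
    refine ⟨⟨bigφ K w0 (Term.var a), Set.mem_range_self _⟩, ?_⟩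
    exact hfid _ _ (hρ ⟨bigφ K w0 (Term.var a), Set.mem_range_self _⟩)
  have hnon : NonExpansive ⇑π := by
    intro σ τ
    show edist _ _ ≤ edist σ τ
    rw [MSub.edist_def, ← hρ σ, ← hρ τ]
    exact hKey _ _
  exact hQt _ A hKS hQA π hsurj hnon


def emptyFam : PEmpty.{u+1} → MetricAlg L := fun x => x.elim

lemma mem_K_of_empty (hP : ClosedUnderProd K) (hS : ClosedUnderSub K)
    (hIso : ClosedUnderIso K) [L.IsAlgebraic]
    (A : MetricAlg L) (hempty : IsEmpty A.carrier) : K A := by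
  have hP1 : K (MProd (emptyFam (L := L))) := hP _ (emptyFam (L := L)) fun i => i.elim
  have hf0 : IsEmpty (L.Functions 0) :=
    ⟨fun c => hempty.false (Structure.funMap c Fin.elim0)⟩
  let S0 : L.Substructure (MProd (emptyFam (L := L))).carrier :=
    { carrier := ∅
      fun_mem := by
        intro n f xx hx
        cases n with
        | zero => exact (hf0.false f).elim
        | succ n => exact absurd (hx 0) (Set.notMem_empty _) }
  have hKS0 : K (MSub _ S0) := hS _ hP1 S0
  have hSe : IsEmpty ((MSub _ S0).carrier) := ⟨fun x => Set.notMem_empty _ x.2⟩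
  haveI := hSe
  haveI := hempty
  let φ : (MSub _ S0) ≃[L] A :=
    { toEquiv := Equiv.equivOfIsEmpty _ _
      map_fun' := by
        intro n f xx
        cases n with
        | zero => exact (hf0.false f).elim
        | succ n => exact (hSe.false (xx 0)).elim
      map_rel' := by intro n r xx; exact (IsEmpty.false r).elim }
  exact hIso _ A hKS0 φ (fun x => (hSe.false x).elim)

/-- **quantitative variety theorem.** A class `K` of quantitative
`L`-algebras closed under isometric isomorphisms is definable by a set of M-equations
(each over a finite variable set) within the class of quantitative `L`-algebras iff it
is closed under M-products, M-subalgebras and Q-quotients (surjective non-expansive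
homomorphic images that are quantitative algebras). -/
theorem quantitative_variety_iff_closed (L : FirstOrder.Language.{u, v}) [L.IsAlgebraic]
    (K : MetricAlg L → Prop)
    (hQ : ∀ A : MetricAlg L, K A → IsQuantitative A)
    (hIso : ClosedUnderIso K) :
    (∃ I : Set (Σ n : ℕ, L.Term (Fin n) × L.Term (Fin n) × ℝ≥0∞),
        ∀ A : MetricAlg L, IsQuantitative A →
          (K A ↔ ∀ e ∈ I, Sat A e.2.1 e.2.2.1 e.2.2.2)) ↔
      (ClosedUnderProd K ∧ ClosedUnderSub K ∧
        ∀ A B : MetricAlg L, K A → IsQuantitative B →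
          ∀ π : A →[L] B, Function.Surjective ⇑π → NonExpansive ⇑π → K B) := by
  constructor
  · rintro ⟨I, hI⟩
    refine ⟨?_, ?_, ?_⟩
    · intro Idx A hKA
      refine (hI (MProd A) (MProd.quantitative A fun i => hQ _ (hKA i))).mpr ?_
      intro e he v
      rw [MProd.edist_def]
      refine iSup_le fun i => ?_
      rw [MProd.realize_apply, MProd.realize_apply]
      exact (hI (A i) (hQ _ (hKA i))).mp (hKA i) e he _
    · intro A hKA S
      refine (hI (MSub A S) (MSub.quantitative A (hQ A hKA) S)).mpr ?_
      intro e he v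
      rw [MSub.edist_def, MSub.coe_realize, MSub.coe_realize]
      exact (hI A (hQ A hKA)).mp hKA e he _
    · intro A B hKA hQB π hsurj hnon
      refine (hI B hQB).mpr ?_
      intro e he v
      choose u hu using fun i => hsurj (v i)
      have hv : v = ⇑π ∘ u := funext fun i => (hu i).symm
      rw [hv, HomClass.realize_term, HomClass.realize_term]
      exact (hnon _ _).trans ((hI A (hQ A hKA)).mp hKA e he u)
  · rintro ⟨hP, hS, hQt⟩
    refine ⟨eqSet K, fun A hQA => ⟨fun hKA e he => he A hKA, fun hsat => ?_⟩⟩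
    by_cases hempty : IsEmpty A.carrier
    · exact mem_K_of_empty K hP hS hIso A hempty
    · have hne : Nonempty A.carrier := not_isEmpty_iff.mp hempty
      have hP1 : K (MProd (emptyFam (L := L))) := hP _ (emptyFam (L := L)) fun i => i.elim
      have w0 : Wit K A.carrier :=
        ⟨MProd (emptyFam (L := L)), ⟨hP1, fun _ i => i.elim⟩⟩
      exact mem_K_of_sat K hP hS hQt A hQA hne w0 hsat


end MetricAlgebraPaper
end
end
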